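/- Let a, cI ∈ ℂ with a not an integer. Suppose f : ℤ × ℤ → ℂ satisfies, for all m, n, t ∈ ℤ, both (a + t + m)·f(m,t) − (a + t)·f(m, n+t) = m·f(m+n, t) and f(n,t)·f(m, n+t) − f(m,t)·f(n, m+t) = δ_{m+n,0}·n·cI. Then cI = 0, and either f(m,n) = f(0,0) for all m, n ∈ ℤ, or f(m,n) = ((a + n)/(a + m + n))·f(0,0) for all m, n ∈ ℤ. -/

import Mathlib

/-- Lemma 3.4(ii), dichotomy (case `b = 0`, `a ∉ ℤ`): `cI = 0` and either `f`
is constant, or `f(m,n) = ((a+n)/(a+m+n)) f(0,0)` for all `m, n`. -/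
theorem stmt_3 (a cI : ℂ) (ha : ∀ n : ℤ, a ≠ (n : ℂ))
    (f : ℤ × ℤ → ℂ)
    (hf1 : ∀ m n t : ℤ,
      (a + t + m) * f (m, t) - (a + t) * f (m, n + t) = m * f (m + n, t))
    (hf2 : ∀ m n t : ℤ,
      f (n, t) * f (m, n + t) - f (m, t) * f (n, m + t)
        = (if m + n = 0 then (1 : ℂ) else 0) * n * cI) :
    cI = 0 ∧
    ((∀ m n : ℤ, f (m, n) = f (0, 0)) ∨
     (∀ m n : ℤ, f (m, n) = ((a + n) / (a + m + n)) * f (0, 0))) := by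
  have hA : ∀ n : ℤ, ∀ z : ℂ, z = a + n → z ≠ 0 := by
    rintro n z rfl h
    exact ha (-n) (by push_cast; linear_combination h)
  set l : ℂ := f (1,0) - a*(a+2)*(f (1,1) - f (1,0)) with hl
  set u : ℂ := (a+1)*(a+2)*(f (1,1) - f (1,0)) with hu
  -- second order recursion for f(1,·)
  have hrec1 : ∀ s : ℤ, (a+s+3)*(a+s+1) * f (1, s+2)
      = ((a+s+3)*(a+s+2)+(a+s+1)*(a+s)-2) * f (1, s+1) - (a+s+1)^2 * f (1, s) := by
    intro s
    have h1 := hf1 1 1 s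
    have h2 := hf1 1 1 (s+1)
    have h3 := hf1 2 (-1) (s+1)
    rw [show (1+1:ℤ) = 2 by norm_num, show (1+s:ℤ) = s+1 by ring] at h1
    rw [show (1+1:ℤ) = 2 by norm_num, show (1+(s+1):ℤ) = s+2 by ring] at h2
    rw [show (2+(-1):ℤ) = 1 by norm_num, show (-1+(s+1):ℤ) = s by ring] at h3
    push_cast at h1 h2 h3 ⊢
    linear_combination (a+(s:ℂ)+1)*h1 - (a+(s:ℂ)+3)*h2 - h3
  have main : ∀ t : ℤ, ((a + t + 1) * f (1,t) = l*(a+t+1) + u*(a+t)) ∧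
      ((a + t + 2) * f (1,t+1) = l*(a+t+2) + u*(a+t+1)) := by
    intro t
    induction t using Int.induction_on with
    | zero =>
      rw [show ((0:ℤ)+1) = 1 by norm_num]
      constructor <;> (push_cast; rw [hl, hu]; ring)
    | succ t ih =>
      have hrec := hrec1 (t : ℤ)
      rw [show ((t:ℤ)+1+1) = (t:ℤ)+2 by ring]
      push_cast at ih hrec ⊢
      constructor
      · linear_combination ih.2
      · have hne : (a+(t:ℂ)+1)*(a+(t:ℂ)+2) ≠ 0 :=
          mul_ne_zero (hA (t+1) _ (by push_cast; ring)) (hA (t+2) _ (by push_cast; ring))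
        apply mul_left_cancel₀ hne
        linear_combination (a+(t:ℂ)+2) * hrec
          + ((a+(t:ℂ)+3)*(a+(t:ℂ)+2)+(a+(t:ℂ)+1)*(a+(t:ℂ))-2) * ih.2
          - (a+(t:ℂ)+1)*(a+(t:ℂ)+2) * ih.1
    | pred t ih =>
      have hrec := hrec1 (-(t:ℤ)-1)
      rw [show (-(t:ℤ)-1+2) = -(t:ℤ)+1 by ring, show (-(t:ℤ)-1+1) = -(t:ℤ) by ring] at hrec
      rw [show (-(t:ℤ)-1+1) = -(t:ℤ) by ring]
      push_cast at ih hrec ⊢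
      constructor
      · have hne : (a-(t:ℂ))*((a-(t:ℂ)+1)*(a-(t:ℂ)+2)) ≠ 0 :=
          mul_ne_zero (hA (-t) _ (by push_cast; ring))
            (mul_ne_zero (hA (-t+1) _ (by push_cast; ring)) (hA (-t+2) _ (by push_cast; ring)))
        apply mul_left_cancel₀ hne
        linear_combination (a-(t:ℂ)+1)*(a-(t:ℂ)+2) * hrec
          + ((a-(t:ℂ)+2)*((a-(t:ℂ)+2)*(a-(t:ℂ)+1)+(a-(t:ℂ))*(a-(t:ℂ)-1)-2)) * ih.1
          - ((a-(t:ℂ))*(a-(t:ℂ)+1)*(a-(t:ℂ)+2)) * ih.2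
      · linear_combination ih.1
  have hPm : ∀ m t : ℤ, (a + t + m) * f (m, t) = l*(a+t+m) + u*(a+t) := by
    intro m t
    have h := hf1 1 (m-1) t
    rw [show ((1:ℤ)+(m-1)) = m by ring] at h
    have k1 := (main t).1
    have k2 := (main (m-1+t)).1
    push_cast at h k1 k2
    have hne : a + (t:ℂ) + 1 ≠ 0 := hA (t+1) _ (by push_cast; ring)
    apply mul_left_cancel₀ hne
    linear_combination -((a+(t:ℂ)+1)*(a+(t:ℂ)+(m:ℂ)))*h + (a+(t:ℂ)+1)*(a+(t:ℂ)+(m:ℂ))*k1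
      - (a+(t:ℂ))*(a+(t:ℂ)+1)*k2
  have ha0 : a ≠ 0 := hA 0 a (by push_cast; ring)
  have hc : f (0,0) = l + u := by
    have h00 := hPm 0 0
    apply mul_left_cancel₀ ha0
    linear_combination h00
  -- l * u = 0
  have hlu : l * u = 0 := by
    have h := hf2 1 2 0
    norm_num at h
    have p1 := hPm 2 0
    have p2 := hPm 1 2
    have p3 := hPm 1 0
    have p4 := hPm 2 1
    push_cast at p1 p2 p3 p4
    have n1 : a + (2:ℂ) ≠ 0 := hA 2 _ (by push_cast; ring)
    have n2 : a + (3:ℂ) ≠ 0 := hA 3 _ (by push_cast; ring)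
    have n3 : a + (1:ℂ) ≠ 0 := hA 1 _ (by push_cast; ring)
    have e1 : f (2,0) = (l*(a+2)+u*a)/(a+2) := by
      rw [eq_div_iff n1]; linear_combination p1
    have e2 : f (1,2) = (l*(a+3)+u*(a+2))/(a+3) := by
      rw [eq_div_iff n2]; linear_combination p2
    have e3 : f (1,0) = (l*(a+1)+u*a)/(a+1) := by
      rw [eq_div_iff n3]; linear_combination p3
    have e4 : f (2,1) = (l*(a+3)+u*(a+1))/(a+3) := by
      rw [eq_div_iff n2]; linear_combination p4
    rw [e1, e2, e3, e4] at h
    field_simp at h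
    have h23 : (2:ℂ)*(a+3) ≠ 0 := mul_ne_zero two_ne_zero n2
    apply mul_left_cancel₀ h23
    linear_combination (a+3) * h
  have hcI : cI = 0 := by
    have h := hf2 1 (-1) 0
    norm_num at h
    have p1 := hPm (-1) 0
    have p2 := hPm 1 (-1)
    have p3 := hPm 1 0
    have p4 := hPm (-1) 1
    push_cast at p1 p2 p3 p4
    have n1 : a - (1:ℂ) ≠ 0 := hA (-1) _ (by push_cast; ring)
    have n3 : a + (1:ℂ) ≠ 0 := hA 1 _ (by push_cast; ring)
    have e1 : f (-1,0) = (l*(a-1)+u*a)/(a-1) := by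
      rw [eq_div_iff n1]; linear_combination p1
    have e2 : f (1,-1) = (l*a+u*(a-1))/a := by
      rw [eq_div_iff ha0]; linear_combination p2
    have e3 : f (1,0) = (l*(a+1)+u*a)/(a+1) := by
      rw [eq_div_iff n3]; linear_combination p3
    have e4 : f (-1,1) = (l*a+u*(a+1))/a := by
      rw [eq_div_iff ha0]; linear_combination p4
    rw [e1, e2, e3, e4] at h
    field_simp at h
    have hD : (a-1)*a^2*(a+1) ≠ 0 :=
      mul_ne_zero (mul_ne_zero n1 (pow_ne_zero 2 ha0)) n3
    apply mul_left_cancel₀ hD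
    linear_combination a * h - 2*a*hlu
  refine ⟨hcI, ?_⟩
  rcases mul_eq_zero.mp hlu with h0 | h0
  · right
    intro m n
    have p := hPm m n
    have hne : a + (m:ℂ) + (n:ℂ) ≠ 0 := hA (m+n) _ (by push_cast; ring)
    rw [div_mul_eq_mul_div, eq_div_iff hne, hc, h0]
    linear_combination p + (a+(m:ℂ)+(n:ℂ))*h0
  · left
    intro m n
    have p := hPm m n
    have hne : a + (n:ℂ) + (m:ℂ) ≠ 0 := hA (n+m) _ (by push_cast; ring)
    rw [hc, h0]
    apply mul_left_cancel₀ hne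
    linear_combination p + (a+(n:ℂ))*h0
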